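/- For every natural number n, the terminating hypergeometric sum ∑_{j=0}^{⌊n/2⌋} (−n/2)_j · (−(n−1)/2)_j / ((n+3/2)_j · j!) · (−1/3)^j equals (8/9)^n · (3/2)_n / (4/3)_n. Equivalently, ₂F₁(−n/2, −(n−1)/2; n+3/2 | −1/3) = 6^n · (2/3)_n · (2n+1)!/(3n+1)!. -/

import Mathlib

open Polynomial

noncomputable def wzF (n j : ℕ) : ℝ :=
  (-1/3 : ℝ)^j * (n.descFactorial (2*j) : ℝ) * ((n+j).factorial : ℝ)
    / (((2*n+2*j+1).factorial : ℝ) * (j.factorial : ℝ))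

noncomputable def wzG (n : ℕ) : ℕ → ℝ
  | 0 => 0
  | j+1 => (-1/3 : ℝ)^j * (n.descFactorial (2*j+1) : ℝ) * ((n+j+1).factorial : ℝ)
    / (((2*n+2*j+3).factorial : ℝ) * (j.factorial : ℝ))

lemma poch_succ_eval (m : ℕ) (x : ℝ) :
    (ascPochhammer ℝ (m+1)).eval x = (ascPochhammer ℝ m).eval x * (x + m) := by
  rw [ascPochhammer_succ_right]
  simp

lemma wz_key (n j : ℕ) :
    3*(3*(n:ℝ)+4) * wzF (n+1) j - 2 * wzF n j = wzG n (j+1) - wzG n j := by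
  cases j with
  | zero =>
      simp only [wzF, wzG]
      have e1 : 2*(n+1)+2*0+1 = 2*n+3 := by ring
      have e2 : 2*n+2*0+1 = 2*n+1 := by ring
      rw [e1, e2]
      have h3 : (2*n+3).factorial = (2*n+3)*((2*n+2)*(2*n+1).factorial) := by
        rw [show 2*n+3 = (2*n+2)+1 from rfl, Nat.factorial_succ,
            show 2*n+2 = (2*n+1)+1 from rfl, Nat.factorial_succ]
      have h4 : (n+1).factorial = (n+1) * n.factorial := Nat.factorial_succ n
      have hne : ((2*n+1).factorial : ℝ) ≠ 0 := Nat.cast_ne_zero.mpr (Nat.factorial_ne_zero _)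
      simp only [Nat.mul_zero, Nat.descFactorial_zero, Nat.descFactorial_succ, Nat.sub_zero, mul_one,
        Nat.add_zero, Nat.factorial_zero, h3, h4]
      push_cast
      field_simp
      ring
  | succ k =>
      rcases show n < 2*k+1 ∨ n = 2*k+1 ∨ 2*k+2 ≤ n by omega with h | h | h
      · have z1 : n.descFactorial (2*(k+1)) = 0 := Nat.descFactorial_of_lt (by omega)
        have z2 : (n+1).descFactorial (2*(k+1)) = 0 := Nat.descFactorial_of_lt (by omega)
        have z3 : n.descFactorial (2*(k+1)+1) = 0 := Nat.descFactorial_of_lt (by omega)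
        have z4 : n.descFactorial (2*k+1) = 0 := Nat.descFactorial_of_lt (by omega)
        simp only [wzF, wzG, z1, z2, z3, z4]
        norm_num
      · subst h
        simp only [wzF, wzG]
        have z1 : (2*k+1).descFactorial (2*(k+1)) = 0 := Nat.descFactorial_of_lt (by omega)
        have z3 : (2*k+1).descFactorial (2*(k+1)+1) = 0 := Nat.descFactorial_of_lt (by omega)
        have d1 : (2*k+1+1).descFactorial (2*(k+1)) = (2*k+2).factorial := by
          rw [show 2*(k+1) = 2*k+2 from rfl, show (2*k+1+1) = 2*k+2 from rfl,
            Nat.descFactorial_self]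
        have d2 : (2*k+1).descFactorial (2*k+1) = (2*k+1).factorial :=
          Nat.descFactorial_self _
        rw [z1, z3, d1, d2]
        have e1 : 2*(2*k+1+1)+2*(k+1)+1 = 6*k+7 := by ring
        have e2 : 2*(2*k+1)+2*(k+1)+3 = 6*k+7 := by ring
        have e3 : 2*(2*k+1)+2*(k+1)+1 = 6*k+5 := by ring
        have e4 : 2*k+1+1+(k+1) = 3*k+3 := by ring
        have e5 : 2*k+1+(k+1) = 3*k+2 := by ring
        rw [e1, e2, e3, e4, e5]
        have h7 : (6*k+7).factorial = (6*k+7)*((6*k+6)*(6*k+5).factorial) := by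
          rw [show 6*k+7 = (6*k+6)+1 from rfl, Nat.factorial_succ,
              show 6*k+6 = (6*k+5)+1 from rfl, Nat.factorial_succ]
        have h8 : (3*k+3).factorial = (3*k+3)*(3*k+2).factorial := by
          rw [show 3*k+3 = (3*k+2)+1 from rfl, Nat.factorial_succ]
        have h9 : (2*k+2).factorial = (2*k+2)*(2*k+1).factorial := by
          rw [show 2*k+2 = (2*k+1)+1 from rfl, Nat.factorial_succ]
        have h10 : (k+1).factorial = (k+1)*k.factorial := Nat.factorial_succ k
        rw [h7, h8, h9, h10]
        have hne1 : ((6*k+5).factorial : ℝ) ≠ 0 := Nat.cast_ne_zero.mpr (Nat.factorial_ne_zero _)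
        have hne2 : (k.factorial : ℝ) ≠ 0 := Nat.cast_ne_zero.mpr (Nat.factorial_ne_zero _)
        push_cast
        field_simp
        ring
      · simp only [wzF, wzG]
        have d1 : (n+1).descFactorial (2*(k+1)) = (n+1) * n.descFactorial (2*k+1) := by
          rw [show 2*(k+1) = (2*k+1)+1 from rfl, Nat.succ_descFactorial_succ]
        have d2 : n.descFactorial (2*(k+1)) = (n-(2*k+1)) * n.descFactorial (2*k+1) := by
          rw [show 2*(k+1) = (2*k+1)+1 from rfl, Nat.descFactorial_succ]
        have d3 : n.descFactorial (2*(k+1)+1)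
            = (n-(2*k+2)) * ((n-(2*k+1)) * n.descFactorial (2*k+1)) := by
          rw [show 2*(k+1)+1 = (2*k+2)+1 from rfl, Nat.descFactorial_succ,
            show 2*k+2 = (2*k+1)+1 from rfl, Nat.descFactorial_succ]
        rw [d1, d2, d3]
        have e1 : 2*(n+1)+2*(k+1)+1 = 2*n+2*k+5 := by ring
        have e2 : 2*n+2*(k+1)+1 = 2*n+2*k+3 := by ring
        have e3 : 2*n+2*(k+1)+3 = 2*n+2*k+5 := by ring
        have e4 : n+1+(k+1) = n+k+2 := by ring
        have e5 : n+(k+1) = n+k+1 := by ring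
        have e6 : n+k+1+1 = n+k+2 := by ring
        rw [e1, e2, e3, e4, e5, e6]
        have h7 : (2*n+2*k+5).factorial
            = (2*n+2*k+5)*((2*n+2*k+4)*(2*n+2*k+3).factorial) := by
          rw [show 2*n+2*k+5 = (2*n+2*k+4)+1 from rfl, Nat.factorial_succ,
              show 2*n+2*k+4 = (2*n+2*k+3)+1 from rfl, Nat.factorial_succ]
        have h8 : (n+k+2).factorial = (n+k+2)*(n+k+1).factorial := by
          rw [show n+k+2 = (n+k+1)+1 from rfl, Nat.factorial_succ]
        have h10 : (k+1).factorial = (k+1)*k.factorial := Nat.factorial_succ k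
        rw [h7, h8, h10]
        have c1 : ((n-(2*k+1) : ℕ) : ℝ) = (n:ℝ) - (2*k+1) := by
          rw [Nat.cast_sub (by omega)]; push_cast; ring
        have c2 : ((n-(2*k+2) : ℕ) : ℝ) = (n:ℝ) - (2*k+2) := by
          rw [Nat.cast_sub (by omega)]; push_cast; ring
        have hne1 : ((2*n+2*k+3).factorial : ℝ) ≠ 0 := Nat.cast_ne_zero.mpr (Nat.factorial_ne_zero _)
        have hne2 : (k.factorial : ℝ) ≠ 0 := Nat.cast_ne_zero.mpr (Nat.factorial_ne_zero _)
        push_cast [c1, c2]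
        field_simp
        ring

lemma wzF_zero_of_lt {n j : ℕ} (h : n < 2*j) : wzF n j = 0 := by
  simp [wzF, Nat.descFactorial_of_lt h]

noncomputable def wzA (n : ℕ) : ℝ := ∑ j ∈ Finset.range (n+1), wzF n j

lemma wz_rec (n : ℕ) : 3*(3*(n:ℝ)+4) * wzA (n+1) = 2 * wzA n := by
  have h1 : ∑ j ∈ Finset.range (n+2), (3*(3*(n:ℝ)+4) * wzF (n+1) j - 2 * wzF n j) = 0 := by
    rw [Finset.sum_congr rfl (fun j _ => wz_key n j), Finset.sum_range_sub]
    have hz : wzG n (n+2) = 0 := by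
      show (-1/3 : ℝ)^(n+1) * (n.descFactorial (2*(n+1)+1) : ℝ) * _ / _ = 0
      rw [Nat.descFactorial_of_lt (show n < 2*(n+1)+1 by omega)]
      simp
    rw [hz]
    simp [wzG]
  rw [Finset.sum_sub_distrib, ← Finset.mul_sum, ← Finset.mul_sum, sub_eq_zero] at h1
  have h2 : wzA n = ∑ j ∈ Finset.range (n+2), wzF n j := by
    rw [wzA, Finset.sum_range_succ _ (n+1), wzF_zero_of_lt (by omega)]
    ring
  rw [wzA, h2]
  exact h1

lemma wzA_c1 (n : ℕ) :
    wzA n * (ascPochhammer ℝ n).eval (4/3 : ℝ) * ((2*n+1).factorial : ℝ)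
      = (8/9 : ℝ)^n * (ascPochhammer ℝ n).eval (3/2 : ℝ) * (n.factorial : ℝ) := by
  induction n with
  | zero => simp [wzA, wzF]
  | succ n ih =>
      have hrec := wz_rec n
      have hne : (3*(3*(n:ℝ)+4)) ≠ 0 := by positivity
      have hA : wzA (n+1) = 2 * wzA n / (3*(3*(n:ℝ)+4)) := by
        field_simp
        linarith [hrec]
      have h7 : (2*(n+1)+1).factorial = (2*n+3)*((2*n+2)*(2*n+1).factorial) := by
        rw [show 2*(n+1)+1 = (2*n+2)+1 from by ring, Nat.factorial_succ,
          show 2*n+2 = (2*n+1)+1 from rfl, Nat.factorial_succ]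
      have h8 : (n+1).factorial = (n+1)*n.factorial := Nat.factorial_succ n
      refine mul_left_cancel₀ hne ?_
      rw [poch_succ_eval, poch_succ_eval, h7, h8]
      push_cast
      linear_combination ((ascPochhammer ℝ n).eval (4/3 : ℝ) * ((4:ℝ)/3+n) * (2*(n:ℝ)+3)
          * (2*(n:ℝ)+2) * (((2*n+1).factorial : ℝ))) * hrec
        + (2*((4:ℝ)/3+n)*(2*(n:ℝ)+3)*(2*(n:ℝ)+2)) * ih

lemma wzA_c2 (n : ℕ) :
    wzA n * ((3*n+1).factorial : ℝ)
      = 6^n * (ascPochhammer ℝ n).eval (2/3 : ℝ) * (n.factorial : ℝ) := by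
  induction n with
  | zero => simp [wzA, wzF]
  | succ n ih =>
      have hrec := wz_rec n
      have hne : (3*(3*(n:ℝ)+4)) ≠ 0 := by positivity
      have hA : wzA (n+1) = 2 * wzA n / (3*(3*(n:ℝ)+4)) := by
        field_simp
        linarith [hrec]
      have h7 : (3*(n+1)+1).factorial = (3*n+4)*((3*n+3)*((3*n+2)*(3*n+1).factorial)) := by
        rw [show 3*(n+1)+1 = (3*n+3)+1 from by ring, Nat.factorial_succ,
          show 3*n+3 = (3*n+2)+1 from rfl, Nat.factorial_succ,
          show 3*n+2 = (3*n+1)+1 from rfl, Nat.factorial_succ]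
      have h8 : (n+1).factorial = (n+1)*n.factorial := Nat.factorial_succ n
      refine mul_left_cancel₀ hne ?_
      rw [poch_succ_eval, h7, h8]
      push_cast
      linear_combination ((3*(n:ℝ)+4)*(3*(n:ℝ)+3)*(3*(n:ℝ)+2)*(((3*n+1).factorial : ℝ))) * hrec
        + (2*(3*(n:ℝ)+4)*(3*(n:ℝ)+3)*(3*(n:ℝ)+2)) * ih

lemma poch_prod (n j : ℕ) (h : 2*j ≤ n) :
    (ascPochhammer ℝ j).eval (-(n:ℝ)/2) * (ascPochhammer ℝ j).eval (-((n:ℝ)-1)/2) * 4^j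
      = (n.descFactorial (2*j) : ℝ) := by
  induction j with
  | zero => simp
  | succ k ih =>
      have ih' := ih (by omega)
      rw [poch_succ_eval, poch_succ_eval, show 2*(k+1) = (2*k+1)+1 from rfl,
        Nat.descFactorial_succ, show 2*k+1 = (2*k)+1 from rfl, Nat.descFactorial_succ]
      have c1 : ((n - (2*k+1) : ℕ) : ℝ) = (n:ℝ) - (2*(k:ℝ)+1) := by
        rw [Nat.cast_sub (by omega)]; push_cast; ring
      have c2 : ((n - 2*k : ℕ) : ℝ) = (n:ℝ) - 2*(k:ℝ) := by
        rw [Nat.cast_sub (by omega)]; push_cast; ring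
      push_cast [c1, c2]
      linear_combination ((-(n:ℝ)/2+k) * (-((n:ℝ)-1)/2+k) * 4) * ih'

lemma poch_c (n j : ℕ) :
    (ascPochhammer ℝ j).eval ((n:ℝ)+3/2) * 4^j * ((2*n+1).factorial : ℝ) * ((n+j).factorial : ℝ)
      = ((2*n+2*j+1).factorial : ℝ) * (n.factorial : ℝ) := by
  induction j with
  | zero => simp
  | succ k ih =>
      have h7 : (2*n+2*(k+1)+1).factorial
          = (2*n+2*k+3)*((2*n+2*k+2)*(2*n+2*k+1).factorial) := by
        rw [show 2*n+2*(k+1)+1 = (2*n+2*k+2)+1 from by ring, Nat.factorial_succ,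
          show 2*n+2*k+2 = (2*n+2*k+1)+1 from rfl, Nat.factorial_succ]
      have h8 : (n+(k+1)).factorial = (n+k+1)*(n+k).factorial := by
        rw [show n+(k+1) = (n+k)+1 from rfl, Nat.factorial_succ]
      rw [poch_succ_eval, h7, h8]
      push_cast
      linear_combination (4*((n:ℝ)+3/2+k)*((n:ℝ)+(k:ℝ)+1)) * ih

lemma term_eq (n j : ℕ) (h : 2*j ≤ n) :
    (ascPochhammer ℝ j).eval (-(n:ℝ)/2) * (ascPochhammer ℝ j).eval (-((n:ℝ)-1)/2)
      / ((ascPochhammer ℝ j).eval ((n:ℝ)+3/2) * (j.factorial : ℝ)) * (-1/3 : ℝ)^j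
      = ((2*n+1).factorial : ℝ) / (n.factorial : ℝ) * wzF n j := by
  have hp := poch_prod n j h
  have hc := poch_c n j
  have hP3 : 0 < (ascPochhammer ℝ j).eval ((n:ℝ)+3/2) :=
    ascPochhammer_pos j _ (by positivity)
  have claim : (ascPochhammer ℝ j).eval (-(n:ℝ)/2) * (ascPochhammer ℝ j).eval (-((n:ℝ)-1)/2)
      * ((2*n+2*j+1).factorial : ℝ) * (n.factorial : ℝ)
      = ((2*n+1).factorial : ℝ) * (n.descFactorial (2*j) : ℝ) * ((n+j).factorial : ℝ)
        * (ascPochhammer ℝ j).eval ((n:ℝ)+3/2) := by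
    have h4 : (4:ℝ)^j ≠ 0 := by positivity
    refine mul_right_cancel₀ h4 ?_
    linear_combination (((2*n+2*j+1).factorial : ℝ)*(n.factorial : ℝ)) * hp
      - ((n.descFactorial (2*j) : ℝ)) * hc
  rw [wzF]
  have hne1 : ((2*n+2*j+1).factorial : ℝ) ≠ 0 := Nat.cast_ne_zero.mpr (Nat.factorial_ne_zero _)
  have hne2 : (n.factorial : ℝ) ≠ 0 := Nat.cast_ne_zero.mpr (Nat.factorial_ne_zero _)
  have hne3 : (j.factorial : ℝ) ≠ 0 := Nat.cast_ne_zero.mpr (Nat.factorial_ne_zero _)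
  set p1 := (ascPochhammer ℝ j).eval (-(n:ℝ)/2) with hp1
  set p2 := (ascPochhammer ℝ j).eval (-((n:ℝ)-1)/2) with hp2
  set p3 := (ascPochhammer ℝ j).eval ((n:ℝ)+3/2) with hp3
  have hne4 : p3 ≠ 0 := ne_of_gt hP3
  have goal' : p1*p2/(p3*(j.factorial : ℝ))
      = ((2*n+1).factorial : ℝ)/(n.factorial : ℝ)
        * ((n.descFactorial (2*j) : ℝ) * ((n+j).factorial : ℝ)
          / (((2*n+2*j+1).factorial : ℝ)*(j.factorial : ℝ))) := by
    field_simp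
    linear_combination claim
  linear_combination ((-1/3 : ℝ)^j) * goal'

theorem terminating_2F1_special_value (n : ℕ) :
    ∑ j ∈ Finset.range (n / 2 + 1),
        (ascPochhammer ℝ j).eval (-(n : ℝ) / 2) *
          (ascPochhammer ℝ j).eval (-((n : ℝ) - 1) / 2) /
          ((ascPochhammer ℝ j).eval ((n : ℝ) + 3 / 2) * (Nat.factorial j : ℝ)) *
          (-1 / 3 : ℝ) ^ j
      = (8 / 9 : ℝ) ^ n * (ascPochhammer ℝ n).eval (3 / 2 : ℝ) /
          (ascPochhammer ℝ n).eval (4 / 3 : ℝ)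
    ∧ ∑ j ∈ Finset.range (n / 2 + 1),
        (ascPochhammer ℝ j).eval (-(n : ℝ) / 2) *
          (ascPochhammer ℝ j).eval (-((n : ℝ) - 1) / 2) /
          ((ascPochhammer ℝ j).eval ((n : ℝ) + 3 / 2) * (Nat.factorial j : ℝ)) *
          (-1 / 3 : ℝ) ^ j
      = 6 ^ n * (ascPochhammer ℝ n).eval (2 / 3 : ℝ) *
          (Nat.factorial (2 * n + 1) : ℝ) / (Nat.factorial (3 * n + 1) : ℝ) := by
  have hsum : ∑ j ∈ Finset.range (n / 2 + 1),
        (ascPochhammer ℝ j).eval (-(n : ℝ) / 2) *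
          (ascPochhammer ℝ j).eval (-((n : ℝ) - 1) / 2) /
          ((ascPochhammer ℝ j).eval ((n : ℝ) + 3 / 2) * (Nat.factorial j : ℝ)) *
          (-1 / 3 : ℝ) ^ j
      = ((2*n+1).factorial : ℝ) / (n.factorial : ℝ) * wzA n := by
    rw [Finset.sum_congr rfl (fun j hj => term_eq n j
      (by have := Finset.mem_range.mp hj; omega)), ← Finset.mul_sum]
    congr 1
    rw [wzA]
    refine Finset.sum_subset (Finset.range_subset_range.mpr (by omega)) ?_
    intro j hj hnj
    exact wzF_zero_of_lt (by
      have h1 := Finset.mem_range.mp hj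
      have h2 : ¬ j < n/2+1 := fun hh => hnj (Finset.mem_range.mpr hh)
      omega)
  have hne2 : (n.factorial : ℝ) ≠ 0 := Nat.cast_ne_zero.mpr (Nat.factorial_ne_zero _)
  have hne5 : ((2*n+1).factorial : ℝ) ≠ 0 := Nat.cast_ne_zero.mpr (Nat.factorial_ne_zero _)
  have hne6 : ((3*n+1).factorial : ℝ) ≠ 0 := Nat.cast_ne_zero.mpr (Nat.factorial_ne_zero _)
  have h43 : (ascPochhammer ℝ n).eval (4/3 : ℝ) ≠ 0 :=
    ne_of_gt (ascPochhammer_pos n _ (by norm_num))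
  constructor
  · rw [hsum]
    have c1 := wzA_c1 n
    have h89 : (8/9 : ℝ)^n * 9^n = 8^n := by
      rw [div_pow]; field_simp
    field_simp
    linear_combination c1
  · rw [hsum]
    have c2 := wzA_c2 n
    field_simp
    linear_combination c2
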